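/- Every finite abelian group admits a doubly harmonious sequence; that is, for every finite abelian group G there exists a sequence g_0, g_1, …, g_m in G such that each element of G appears exactly twice among the terms g_i and exactly twice among the cyclic consecutive sums ĝ_0 = g_m + g_0 and ĝ_i = g_{i-1} + g_i for 1 ≤ i ≤ m. -/

import Mathlib

open Equiv

section Count

variable {q : ℕ} [NeZero q]

/-- the 2-to-1 map (y,b) ↦ 2y + b from `ZMod q × Bool` viewed inside `ZMod (2*q)` -/
noncomputable def dblEquiv : ZMod q × Bool ≃ ZMod (2 * q) := by
  apply Equiv.ofBijective (fun p => ((2 * (p.1.val) + (cond p.2 1 0) : ℕ) : ZMod (2 * q)))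
  constructor
  · rintro ⟨y, b⟩ ⟨y', b'⟩ h
    have h2q : (0:ℕ) < 2 * q := by have := NeZero.pos q; omega
    have hy := ZMod.val_lt y
    have hy' := ZMod.val_lt y'
    have hlt : 2 * y.val + (cond b 1 0) < 2 * q := by cases b <;> simp <;> omega
    have hlt' : 2 * y'.val + (cond b' 1 0) < 2 * q := by cases b' <;> simp <;> omega
    have := congrArg ZMod.val h
    rw [ZMod.val_natCast_of_lt hlt, ZMod.val_natCast_of_lt hlt'] at this
    have hb : b = b' := by cases b <;> cases b' <;> simp_all <;> omega
    have hyy : y.val = y'.val := by cases b <;> cases b' <;> simp_all <;> omega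
    exact Prod.ext (ZMod.val_injective _ hyy) hb
  · intro k
    have hk := ZMod.val_lt k
    refine ⟨⟨((k.val / 2 : ℕ) : ZMod q), decide (k.val % 2 = 1)⟩, ?_⟩
    have hlt : k.val / 2 < q := by omega
    simp only [ZMod.val_natCast_of_lt hlt]
    have : 2 * (k.val / 2) + (cond (decide (k.val % 2 = 1)) 1 0) = k.val := by
      rcases Nat.even_or_odd k.val with he | ho
      · have : k.val % 2 = 0 := Nat.even_iff.mp he
        simp [this]; omega
      · have : k.val % 2 = 1 := Nat.odd_iff.mp ho
        simp [this]; omega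
    rw [this, ZMod.natCast_val, ZMod.cast_id]

end Count

section Count2
variable {q : ℕ} [NeZero q]

noncomputable instance : NeZero (2 * q) := ⟨by have := NeZero.pos q; omega⟩

def castF : ZMod (2 * q) → ZMod q := fun k => (k.val : ZMod q)

lemma castF_add (k l : ZMod (2 * q)) : castF (k + l) = castF k + castF l := by
  simp only [castF]
  have h : (2 * q : ℕ) ≠ 0 := NeZero.ne _
  rw [ZMod.val_add]
  have hq : q ∣ 2 * q := ⟨2, by ring⟩
  have : ((k.val + l.val) % (2 * q) : ℕ) ≡ (k.val + l.val) [MOD q] :=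
    (Nat.ModEq.of_dvd hq (Nat.mod_modEq _ _))
  calc ((k.val + l.val) % (2*q) : ℕ) = (((k.val + l.val) % (2*q) : ℕ) : ZMod q) := rfl
    _ = ((k.val + l.val : ℕ) : ZMod q) := (ZMod.natCast_eq_natCast_iff _ _ _).mpr this
    _ = (k.val : ZMod q) + (l.val : ZMod q) := by push_cast; ring

lemma castF_ker (k : ZMod (2 * q)) : castF k = 0 ↔ k = 0 ∨ k = (q : ZMod (2*q)) := by
  constructor
  · intro h
    have hdvd : q ∣ k.val := by
      have := (ZMod.natCast_eq_zero_iff k.val q).mp h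
      exact this
    have hk := ZMod.val_lt k
    have hq := NeZero.pos q
    rcases hdvd with ⟨c, hc⟩
    have hc2 : c < 2 := by nlinarith
    interval_cases c
    · left
      have hv : k.val = 0 := by omega
      calc k = ((k.val : ℕ) : ZMod (2*q)) := by rw [ZMod.natCast_val, ZMod.cast_id]
        _ = 0 := by rw [hv]; simp
    · right
      have hv : k.val = q := by omega
      calc k = ((k.val : ℕ) : ZMod (2*q)) := by rw [ZMod.natCast_val, ZMod.cast_id]
        _ = (q : ZMod (2*q)) := by rw [hv]
  · rintro (rfl | rfl)
    · simp [castF]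
    · simp only [castF]
      have hq : q < 2 * q := by have := NeZero.pos q; omega
      rw [ZMod.val_natCast_of_lt hq]
      exact (ZMod.natCast_self q)

lemma castF_fiber_card (a : ZMod q) : Nat.card {k : ZMod (2*q) // castF k = a} = 2 := by
  have hq := NeZero.pos q
  set k₀ : ZMod (2*q) := ((a.val : ℕ) : ZMod (2*q)) with hk₀
  have hFk₀ : castF k₀ = a := by
    have hlt : a.val < 2 * q := lt_of_lt_of_le (ZMod.val_lt a) (by omega)
    rw [castF, hk₀, ZMod.val_natCast_of_lt hlt, ZMod.natCast_val, ZMod.cast_id]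
  have e1 : {k : ZMod (2*q) // castF k = a} ≃ {k : ZMod (2*q) // castF k = 0} := by
    refine ⟨fun p => ⟨p.1 - k₀, ?_⟩, fun p => ⟨p.1 + k₀, ?_⟩, fun p => by simp, fun p => by simp⟩
    · have h := castF_add (p.1 - k₀) k₀
      rw [sub_add_cancel, p.2] at h
      rw [hFk₀] at h
      linear_combination h.symm
    · rw [castF_add, p.2, hFk₀, zero_add]
  have e2 : {k : ZMod (2*q) // castF k = 0} ≃ Bool := by
    have hqne : (q : ZMod (2*q)) ≠ 0 := by
      intro h
      have := congrArg ZMod.val h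
      rw [ZMod.val_natCast_of_lt (by omega), ZMod.val_zero] at this
      omega
    refine ⟨fun p => decide (p.1 = (q : ZMod (2*q))), fun b => ⟨cond b (q : ZMod (2*q)) 0, ?_⟩, ?_, ?_⟩
    · cases b <;> simp [castF_ker]
    · rintro ⟨k, hk⟩
      rcases (castF_ker k).mp hk with rfl | rfl
      · simp [hqne.symm]
      · simp
    · intro b
      cases b <;> simp [hqne, Ne.symm hqne]
  rw [Nat.card_congr (e1.trans e2), Nat.card_eq_fintype_card, Fintype.card_bool]

lemma count_two_mul (a : ZMod q) :
    Nat.card {y : ZMod q // 2*y = a} + Nat.card {y : ZMod q // 2*y + 1 = a} = 2 := by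
  have key : ∀ p : ZMod q × Bool, castF (dblEquiv p) = 2 * p.1 + (cond p.2 1 0) := by
    rintro ⟨y, b⟩
    have hy := ZMod.val_lt y
    have hq := NeZero.pos q
    have hlt : 2 * y.val + (cond b 1 0) < 2 * q := by cases b <;> simp <;> omega
    show castF (((2 * y.val + cond b 1 0 : ℕ) : ZMod (2 * q))) = _
    simp only [castF, ZMod.val_natCast_of_lt hlt]
    push_cast
    cases b <;> simp [ZMod.natCast_val, ZMod.cast_id', ZMod.natCast_zmod_val]
  have e3 : {p : ZMod q × Bool // castF (dblEquiv p) = a} ≃ {k : ZMod (2*q) // castF k = a} :=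
    (dblEquiv.subtypeEquiv (fun p => by rfl))
  have e4 : {p : ZMod q × Bool // castF (dblEquiv p) = a} ≃
      ({y : ZMod q // 2*y = a} ⊕ {y : ZMod q // 2*y + 1 = a}) := by
    refine ⟨fun p => ?_, fun s => ?_, ?_, ?_⟩
    · rcases p with ⟨⟨y, b⟩, hp⟩
      rw [key] at hp
      cases b
      · exact Sum.inl ⟨y, by simpa using hp⟩
      · exact Sum.inr ⟨y, by simpa using hp⟩
    · rcases s with ⟨y, hy⟩ | ⟨y, hy⟩
      · exact ⟨(y, false), by rw [key]; simpa using hy⟩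
      · exact ⟨(y, true), by rw [key]; simpa using hy⟩
    · rintro ⟨⟨y, b⟩, hp⟩
      cases b <;> rfl
    · rintro (⟨y, hy⟩ | ⟨y, hy⟩) <;> rfl
  have := castF_fiber_card a
  rw [← Nat.card_congr e3, Nat.card_congr e4, Nat.card_sum] at this
  exact this

end Count2

section Sys

/-- A "doubly harmonious graph system" on an additive group `V`:
two successor maps (edges `(b,x) : x → s b x`), such that heads cover every
vertex twice, labels `x + s b x` cover every element twice, the graph is
connected, and there are self-loops (via `s false`) at two distinct vertices. -/
structure DHSys (V : Type*) [AddCommGroup V] where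
  s : Bool → V → V
  head2 : ∀ a : V, Nat.card {e : Bool × V // s e.1 e.2 = a} = 2
  label2 : ∀ a : V, Nat.card {e : Bool × V // e.2 + s e.1 e.2 = a} = 2
  conn : ∀ x y : V, Relation.EqvGen (fun u v => ∃ b, s b u = v) x y
  x₀ : V
  x₁ : V
  hx : x₀ ≠ x₁
  loop₀ : s false x₀ = x₀
  loop₁ : s false x₁ = x₁

/-- base case : cyclic group of order ≥ 2. -/
noncomputable def baseSys (m : ℕ) (hm : 1 < m) : DHSys (ZMod m) := by
  haveI : NeZero m := ⟨by omega⟩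
  refine
    { s := fun b x => cond b (x + 1) x
      head2 := ?_
      label2 := ?_
      conn := ?_
      x₀ := 0
      x₁ := 1
      hx := ?_
      loop₀ := rfl
      loop₁ := rfl }
  · intro a
    have e : {e : Bool × ZMod m // cond e.1 (e.2+1) e.2 = a} ≃ Bool := by
      refine ⟨fun p => p.1.1, fun b => ⟨(b, cond b (a-1) a), ?_⟩, ?_, ?_⟩
      · cases b <;> simp [sub_add_cancel]
      · rintro ⟨⟨b, x⟩, hp⟩
        cases b
        · simp only [cond_false] at hp
          subst hp; rfl
        · simp only [cond_true] at hp
          apply Subtype.ext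
          simp only [Prod.mk.injEq, true_and]
          rw [← hp]; ring_nf; simp
      · intro b; cases b <;> rfl
    rw [Nat.card_congr e, Nat.card_eq_fintype_card, Fintype.card_bool]
  · intro a
    have e : {e : Bool × ZMod m // e.2 + cond e.1 (e.2+1) e.2 = a} ≃
        ({y : ZMod m // 2*y = a} ⊕ {y : ZMod m // 2*y + 1 = a}) := by
      refine ⟨fun p => ?_, fun s => ?_, ?_, ?_⟩
      · rcases p with ⟨⟨b, x⟩, hp⟩
        cases b
        · exact Sum.inl ⟨x, by simpa [two_mul] using hp⟩
        · exact Sum.inr ⟨x, by simp at hp; rw [← hp]; ring⟩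
      · rcases s with ⟨y, hy⟩ | ⟨y, hy⟩
        · exact ⟨(false, y), by simpa [two_mul] using hy⟩
        · exact ⟨(true, y), by simp; rw [← hy]; ring⟩
      · rintro ⟨⟨b, x⟩, hp⟩; cases b <;> rfl
      · rintro (⟨y, hy⟩ | ⟨y, hy⟩) <;> rfl
    rw [Nat.card_congr e, Nat.card_sum, count_two_mul]
  · -- connectivity
    have step : ∀ x : ZMod m, Relation.EqvGen (fun u v => ∃ b, (cond b (u+1) u) = v) x (x+1) :=
      fun x => Relation.EqvGen.rel _ _ ⟨true, rfl⟩
    have steps : ∀ (k : ℕ) (x : ZMod m),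
        Relation.EqvGen (fun u v => ∃ b, (cond b (u+1) u) = v) x (x + (k:ZMod m)) := by
      intro k
      induction k with
      | zero => intro x; simpa using Relation.EqvGen.refl x
      | succ n ih =>
        intro x
        have h1 := ih x
        have h2 := step (x + (n : ZMod m))
        push_cast
        have h3 : x + ((n : ZMod m) + 1) = (x + (n : ZMod m)) + 1 := by ring
        rw [h3]
        exact Relation.EqvGen.trans _ _ _ h1 h2
    intro x y
    have : y = x + (((y - x).val : ℕ) : ZMod m) := by
      rw [ZMod.natCast_val, ZMod.cast_id]; ring
    rw [this]
    exact steps _ x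
  · -- 0 ≠ 1
    haveI : Fact (1 < m) := ⟨hm⟩
    exact zero_ne_one

end Sys

section Pair

lemma pair_of_card_two {α : Type*} {p : α → Prop} (h : Nat.card {x // p x} = 2) :
    ∃ a b : α, a ≠ b ∧ p a ∧ p b ∧ ∀ c, p c → c = a ∨ c = b := by
  rw [Nat.card_eq_two_iff] at h
  obtain ⟨⟨a, ha⟩, ⟨b, hb⟩, hab, huniv⟩ := h
  refine ⟨a, b, ?_, ha, hb, ?_⟩
  · intro h'; exact hab (by simp [Subtype.ext_iff, h'])
  · intro c hc
    have : (⟨c, hc⟩ : {x // p x}) ∈ ({⟨a, ha⟩, ⟨b, hb⟩} : Set {x // p x}) := by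
      rw [huniv]; trivial
    rcases this with h' | h'
    · left; exact congrArg Subtype.val h'
    · right; exact congrArg Subtype.val h'

end Pair

section Product

open scoped Classical

variable {V : Type*} [AddCommGroup V] (S : DHSys V)

/-- the label of an edge of `S` -/
def lab (e : Bool × V) : V := e.2 + S.s e.1 e.2

noncomputable def pick (ℓ : V) : Bool × V :=
  if h : ∃ e, lab S e = ℓ then Classical.choose h else (false, 0)

lemma pick_lab {ℓ : V} (h : ∃ e, lab S e = ℓ) : lab S (pick S ℓ) = ℓ := by
  rw [pick, dif_pos h]; exact Classical.choose_spec h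

/-- the alternating boolean marking on edges: in every label fiber exactly one
edge is marked, the loop at `x₀` is marked and the loop at `x₁` is not. -/
noncomputable def mark (e : Bool × V) : Bool :=
  if lab S e = lab S (false, S.x₀) then decide (e = (false, S.x₀))
  else if lab S e = lab S (false, S.x₁) then decide (e ≠ (false, S.x₁))
  else decide (e = pick S (lab S e))

lemma mark_x₀ : mark S (false, S.x₀) = true := by simp [mark]

lemma mark_x₁ : mark S (false, S.x₁) = false := by
  by_cases h : lab S (false, S.x₁) = lab S (false, S.x₀)
  · rw [mark, if_pos h]
    simp only [decide_eq_false_iff_not]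
    intro h'
    exact S.hx (congrArg Prod.snd h').symm
  · rw [mark, if_neg h, if_pos rfl]
    simp

lemma mark_alt {e e' : Bool × V} (hl : lab S e = lab S e') (hne : e ≠ e') :
    mark S e = !(mark S e') := by
  obtain ⟨E1, E2, h12, hE1, hE2, hall⟩ := pair_of_card_two (p := fun f => lab S f = lab S e)
    (S.label2 (lab S e))
  -- helper: the fiber of `lab e` is `{E1, E2}` and `e, e'` are the two of them.
  have he : e = E1 ∨ e = E2 := hall e rfl
  have he' : e' = E1 ∨ e' = E2 := hall e' hl.symm
  have hsplit : (e = E1 ∧ e' = E2) ∨ (e = E2 ∧ e' = E1) := by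
    rcases he with rfl | rfl <;> rcases he' with rfl | rfl <;> tauto
  -- in each branch of `mark`, the value is `decide (· = A)` for a fixed `A` in the fiber
  have key : ∀ A : Bool × V, lab S A = lab S e →
      (∀ f, lab S f = lab S e → mark S f = decide (f = A)) → mark S e = !(mark S e') := by
    intro A hA hform
    have hAE : A = E1 ∨ A = E2 := hall A hA
    rw [hform e rfl, hform e' hl.symm]
    rcases hsplit with ⟨rfl, rfl⟩ | ⟨rfl, rfl⟩ <;> rcases hAE with rfl | rfl <;>
      simp [h12, Ne.symm h12]
  have key' : ∀ A : Bool × V, lab S A = lab S e →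
      (∀ f, lab S f = lab S e → mark S f = !decide (f = A)) → mark S e = !(mark S e') := by
    intro A hA hform
    have hAE : A = E1 ∨ A = E2 := hall A hA
    rw [hform e rfl, hform e' hl.symm]
    rcases hsplit with ⟨rfl, rfl⟩ | ⟨rfl, rfl⟩ <;> rcases hAE with rfl | rfl <;>
      simp [h12, Ne.symm h12]
  by_cases h0 : lab S e = lab S (false, S.x₀)
  · refine key (false, S.x₀) ?_ ?_
    · rw [h0]
    · intro f hf; rw [mark, if_pos (hf.trans h0)]
  · by_cases h1 : lab S e = lab S (false, S.x₁)
    · refine key' (false, S.x₁) ?_ ?_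
      · rw [h1]
      · intro f hf
        rw [mark, if_neg (fun hcon => h0 (hf.symm.trans hcon)), if_pos (hf.trans h1)]
        simp
    · refine key (pick S (lab S e)) (pick_lab S ⟨e, rfl⟩) ?_
      intro f hf
      rw [mark, if_neg (by rwa [hf]), if_neg (by rwa [hf]), hf]

end Product

section Product2

open scoped Classical

variable {V : Type*} [AddCommGroup V] (S : DHSys V) (q : ℕ)

noncomputable def dOf (e : Bool × V) : ZMod q := if mark S e then 1 else 0

/-- the product system on `ZMod q × V` -/
noncomputable def prodSys (hq : 1 < q) : DHSys (ZMod q × V) := by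
  haveI : NeZero q := ⟨by omega⟩
  haveI : Fact (1 < q) := ⟨hq⟩
  refine
    { s := fun b p => (p.1 + dOf S q (b, p.2), S.s b p.2)
      head2 := ?_
      label2 := ?_
      conn := ?_
      x₀ := ((0 : ZMod q), S.x₁)
      x₁ := ((1 : ZMod q), S.x₁)
      hx := fun h => zero_ne_one (congrArg Prod.fst h)
      loop₀ := ?_
      loop₁ := ?_ }
  · -- head2
    rintro ⟨a1, a2⟩
    have e : {e : Bool × (ZMod q × V) //
        ((e.2.1 + dOf S q (e.1, e.2.2), S.s e.1 e.2.2) : ZMod q × V) = (a1, a2)} ≃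
        {e : Bool × V // S.s e.1 e.2 = a2} := by
      refine ⟨fun p => ⟨(p.1.1, p.1.2.2), ?_⟩,
              fun p => ⟨(p.1.1, (a1 - dOf S q (p.1.1, p.1.2), p.1.2)), ?_⟩, ?_, ?_⟩
      · exact congrArg Prod.snd p.2
      · have := p.2
        simp only [sub_add_cancel, this]
      · rintro ⟨⟨b, ⟨y, x⟩⟩, hp⟩
        have h1 : y + dOf S q (b, x) = a1 := congrArg Prod.fst hp
        apply Subtype.ext
        have h2 : a1 - dOf S q (b, x) = y := by rw [← h1]; ring
        simp [h2]
      · rintro ⟨⟨b, x⟩, hp⟩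
        rfl
    rw [Nat.card_congr e, S.head2]
  · -- label2
    rintro ⟨a1, ℓ⟩
    obtain ⟨E1, E2, h12, hE1, hE2, hall⟩ := pair_of_card_two (p := fun f => lab S f = ℓ)
      (S.label2 ℓ)
    have labelT : ∀ (b : Bool) (y : ZMod q) (x : V),
        ((y, x) + ((y, x).1 + dOf S q (b, (y, x).2), S.s b (y, x).2) : ZMod q × V)
          = (2*y + dOf S q (b, x), lab S (b, x)) := by
      intro b y x
      simp only [Prod.mk_add_mk, lab, Prod.mk.injEq]
      exact ⟨by ring, trivial⟩
    have e : {e : Bool × (ZMod q × V) //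
        (e.2 + (e.2.1 + dOf S q (e.1, e.2.2), S.s e.1 e.2.2) : ZMod q × V) = (a1, ℓ)} ≃
        ({y : ZMod q // 2*y + dOf S q E1 = a1} ⊕ {y : ZMod q // 2*y + dOf S q E2 = a1}) := by
      refine ⟨fun p => ?_, fun s => ?_, ?_, ?_⟩
      · rcases p with ⟨⟨b, ⟨y, x⟩⟩, hp⟩
        rw [labelT] at hp
        by_cases hE : (b, x) = E1
        · exact Sum.inl ⟨y, by rw [← hE]; exact congrArg Prod.fst hp⟩
        · have : (b, x) = E2 := by
            rcases hall (b, x) (congrArg Prod.snd hp) with h | h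
            · exact absurd h hE
            · exact h
          exact Sum.inr ⟨y, by rw [← this]; exact congrArg Prod.fst hp⟩
      · rcases s with ⟨y, hy⟩ | ⟨y, hy⟩
        · refine ⟨(E1.1, (y, E1.2)), ?_⟩
          rw [labelT]
          exact Prod.ext (by simpa using hy) (by simpa using hE1)
        · refine ⟨(E2.1, (y, E2.2)), ?_⟩
          rw [labelT]
          exact Prod.ext (by simpa using hy) (by simpa using hE2)
      · rintro ⟨⟨b, ⟨y, x⟩⟩, hp⟩
        by_cases hE : (b, x) = E1
        · simp only [hE, dif_pos]
          apply Subtype.ext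
          simp [← hE]
        · have hE2' : (b, x) = E2 := by
            rw [labelT] at hp
            rcases hall (b, x) (congrArg Prod.snd hp) with h | h
            · exact absurd h hE
            · exact h
          simp only [hE, dif_neg]
          apply Subtype.ext
          simp [← hE2']
      · rintro (⟨y, hy⟩ | ⟨y, hy⟩)
        · simp
        · have : (E2.1, E2.2) ≠ E1 := by simpa using (Ne.symm h12)
          simp [this]
    rw [Nat.card_congr e, Nat.card_sum]
    have halt : mark S E1 = !(mark S E2) := mark_alt S (hE1.trans hE2.symm) h12
    rcases Bool.eq_false_or_eq_true (mark S E2) with h2 | h2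
    · rw [h2, Bool.not_true] at halt
      rw [show dOf S q E1 = 0 by rw [dOf, halt]; simp,
          show dOf S q E2 = 1 by rw [dOf, h2]; simp]
      have := count_two_mul (q := q) a1
      simpa using this
    · rw [h2, Bool.not_false] at halt
      rw [show dOf S q E1 = 1 by rw [dOf, halt]; simp,
          show dOf S q E2 = 0 by rw [dOf, h2]; simp, add_comm]
      have := count_two_mul (q := q) a1
      simpa using this
  · -- connectivity
    set s' : Bool → ZMod q × V → ZMod q × V := fun b p => (p.1 + dOf S q (b, p.2), S.s b p.2)
      with hs'
    set r' : ZMod q × V → ZMod q × V → Prop := fun u v => ∃ b, s' b u = v with hr'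
    have step : ∀ (b : Bool) (y : ZMod q) (x : V),
        Relation.EqvGen r' (y, x) (y + dOf S q (b, x), S.s b x) :=
      fun b y x => Relation.EqvGen.rel _ _ ⟨b, rfl⟩
    -- lifting of connectivity in V
    have lift : ∀ x x' : V, Relation.EqvGen (fun u v => ∃ b, S.s b u = v) x x' →
        (∀ y : ZMod q, ∃ y', Relation.EqvGen r' (y, x) (y', x')) ∧
        (∀ y : ZMod q, ∃ y', Relation.EqvGen r' (y, x') (y', x)) := by
      intro x x' h
      induction h with
      | rel u v huv =>
        obtain ⟨b, hb⟩ := huv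
        constructor
        · intro y
          exact ⟨y + dOf S q (b, u), by rw [← hb]; exact step b y u⟩
        · intro y
          refine ⟨y - dOf S q (b, u), ?_⟩
          have := step b (y - dOf S q (b, u)) u
          rw [sub_add_cancel, hb] at this
          exact Relation.EqvGen.symm _ _ this
      | refl u => exact ⟨fun y => ⟨y, Relation.EqvGen.refl _⟩, fun y => ⟨y, Relation.EqvGen.refl _⟩⟩
      | symm u v _ ih => exact ⟨ih.2, ih.1⟩
      | trans u v w _ _ ih1 ih2 =>
        constructor
        · intro y
          obtain ⟨y1, h1⟩ := ih1.1 y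
          obtain ⟨y2, h2⟩ := ih2.1 y1
          exact ⟨y2, Relation.EqvGen.trans _ _ _ h1 h2⟩
        · intro y
          obtain ⟨y1, h1⟩ := ih2.2 y
          obtain ⟨y2, h2⟩ := ih1.2 y1
          exact ⟨y2, Relation.EqvGen.trans _ _ _ h1 h2⟩
    -- shifting at x₀
    have shift1 : ∀ y : ZMod q, Relation.EqvGen r' (y, S.x₀) (y + 1, S.x₀) := by
      intro y
      have := step false y S.x₀
      rw [S.loop₀] at this
      have hd : dOf S q (false, S.x₀) = 1 := by rw [dOf, mark_x₀, if_pos rfl]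
      rwa [hd] at this
    have shifts : ∀ (k : ℕ) (y : ZMod q),
        Relation.EqvGen r' (y, S.x₀) (y + (k : ZMod q), S.x₀) := by
      intro k
      induction k with
      | zero => intro y; simpa using Relation.EqvGen.refl (α := ZMod q × V) (y, S.x₀)
      | succ n ih =>
        intro y
        have h1 := ih y
        have h2 := shift1 (y + (n : ZMod q))
        push_cast
        have h3 : y + ((n : ZMod q) + 1) = (y + (n : ZMod q)) + 1 := by ring
        rw [h3]
        exact Relation.EqvGen.trans _ _ _ h1 h2
    have shiftAll : ∀ y y' : ZMod q, Relation.EqvGen r' (y, S.x₀) (y', S.x₀) := by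
      intro y y'
      have : y' = y + (((y' - y).val : ℕ) : ZMod q) := by
        rw [ZMod.natCast_val, ZMod.cast_id]; ring
      rw [this]
      exact shifts _ y
    rintro ⟨y, x⟩ ⟨y', x'⟩
    obtain ⟨c1, hc1⟩ := (lift x S.x₀ (S.conn x S.x₀)).1 y
    obtain ⟨c2, hc2⟩ := (lift x' S.x₀ (S.conn x' S.x₀)).1 y'
    exact Relation.EqvGen.trans _ _ _ hc1 (Relation.EqvGen.trans _ _ _
      (shiftAll c1 c2) (Relation.EqvGen.symm _ _ hc2))
  · -- loop₀
    have hd : dOf S q (false, S.x₁) = 0 := by rw [dOf, mark_x₁]; simp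
    simp only [hd, add_zero, S.loop₁]
  · -- loop₁
    have hd : dOf S q (false, S.x₁) = 0 := by rw [dOf, mark_x₁]; simp
    simp only [hd, add_zero, S.loop₁]

end Product2

section Merge

open Equiv Equiv.Perm

variable {α : Type*} [DecidableEq α]

lemma traj_eq (π : Equiv.Perm α) (a b x : α) (j : ℕ)
    (h : ∀ i < j, (π ^ i) x ≠ a ∧ (π ^ i) x ≠ b) :
    ((π * Equiv.swap a b) ^ j) x = (π ^ j) x := by
  induction j generalizing x with
  | zero => rfl
  | succ n ih =>
    have h0 := h 0 (Nat.succ_pos n)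
    simp only [pow_zero, Equiv.Perm.one_apply] at h0
    have hswap : (π * Equiv.swap a b) x = π x := by
      simp only [Equiv.Perm.mul_apply]
      rw [Equiv.swap_apply_of_ne_of_ne h0.1 h0.2]
    rw [pow_succ, pow_succ]
    simp only [Equiv.Perm.mul_apply]
    rw [Equiv.swap_apply_of_ne_of_ne h0.1 h0.2]
    refine ih (π x) (fun i hi => ?_)
    have h1 := h (i+1) (Nat.succ_lt_succ hi)
    rw [pow_succ', Equiv.Perm.mul_apply] at h1
    have e : (π ^ i) (π x) = π ((π ^ i) x) := by
      rw [← Equiv.Perm.mul_apply, ← Equiv.Perm.mul_apply, ← pow_succ, ← pow_succ']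
    rw [e]
    exact h1

lemma merge_aux [Finite α] (π : Equiv.Perm α) (a b : α) (hab : ¬π.SameCycle a b)
    (x : α) (hx : π.SameCycle x a) : (π * Equiv.swap a b).SameCycle x a := by
  classical
  obtain ⟨i, _, hpow⟩ := hx.exists_pow_eq'
  have hQ : ∃ j, (π^j) x = a ∨ (π^j) x = b := ⟨i, Or.inl hpow⟩
  set j₀ := Nat.find hQ with hj₀
  have hfind := Nat.find_spec hQ
  have hmin := fun i (hi : i < j₀) => Nat.find_min hQ hi
  rcases hfind with hA | hB
  · refine ⟨(j₀ : ℤ), ?_⟩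
    rw [zpow_natCast, traj_eq π a b x j₀ (fun i hi => ?_)]
    · exact hA
    · have := hmin i hi
      push_neg at this
      exact this
  · exfalso
    exact hab ((Equiv.Perm.SameCycle.symm hx).trans ⟨(j₀ : ℤ), by rw [zpow_natCast]; exact hB⟩)

lemma merge_ab [Finite α] (π : Equiv.Perm α) (a b : α) (hab : ¬π.SameCycle a b) :
    (π * Equiv.swap a b).SameCycle a b := by
  have h1 : (π * Equiv.swap a b) b = π a := by
    simp [Equiv.Perm.mul_apply, Equiv.swap_apply_right]
  have h2 : (π * Equiv.swap a b).SameCycle b (π a) := ⟨1, by simpa using h1⟩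
  have h3 : π.SameCycle (π a) a := ⟨-1, by simp⟩
  have h4 := merge_aux π a b hab (π a) h3
  exact (h2.trans h4).symm

end Merge

section Euler

open scoped Classical

variable {V : Type*} [AddCommGroup V] (S : DHSys V)

/-- head of an edge -/
def hd (e : Bool × V) : V := S.s e.1 e.2

lemma exists_inPair (v : V) : ∃ p : (Bool × V) × (Bool × V), p.1 ≠ p.2 ∧
    hd S p.1 = v ∧ hd S p.2 = v ∧ ∀ e : Bool × V, hd S e = v → e = p.1 ∨ e = p.2 := by
  obtain ⟨a, b, hab, ha, hb, hall⟩ := pair_of_card_two (p := fun e : Bool × V => hd S e = v)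
    (by exact S.head2 v)
  exact ⟨(a, b), hab, ha, hb, hall⟩

noncomputable def inP (v : V) : (Bool × V) × (Bool × V) := Classical.choose (exists_inPair S v)

lemma inP_ne (v : V) : (inP S v).1 ≠ (inP S v).2 := (Classical.choose_spec (exists_inPair S v)).1
lemma inP_hd1 (v : V) : hd S (inP S v).1 = v := (Classical.choose_spec (exists_inPair S v)).2.1
lemma inP_hd2 (v : V) : hd S (inP S v).2 = v := (Classical.choose_spec (exists_inPair S v)).2.2.1
lemma inP_all (v : V) : ∀ e : Bool × V, hd S e = v → e = (inP S v).1 ∨ e = (inP S v).2 :=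
  (Classical.choose_spec (exists_inPair S v)).2.2.2

/-- the transition permutation on edges given a switching choice `χ` -/
noncomputable def transPerm (χ : V → Bool) : Equiv.Perm (Bool × V) where
  toFun e := ((if e = (inP S (hd S e)).1 then χ (hd S e) else !(χ (hd S e))), hd S e)
  invFun e' := if e'.1 = χ e'.2 then (inP S e'.2).1 else (inP S e'.2).2
  left_inv := by
    intro e
    dsimp only
    rcases inP_all S (hd S e) e rfl with h | h
    · rw [if_pos h, if_pos rfl]
      exact h.symm
    · have hne : e ≠ (inP S (hd S e)).1 := fun hc => inP_ne S (hd S e) (hc.symm.trans h)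
      rw [if_neg hne, if_neg (Bool.not_ne_self _)]
      exact h.symm
  right_inv := by
    rintro ⟨b, v⟩
    dsimp only
    by_cases hb : b = χ v
    · rw [if_pos hb]
      rw [show hd S (inP S v).1 = v from inP_hd1 S v, if_pos rfl]
      exact Prod.ext hb.symm rfl
    · rw [if_neg hb]
      rw [show hd S (inP S v).2 = v from inP_hd2 S v, if_neg ((inP_ne S v).symm)]
      refine Prod.ext ?_ rfl
      have hbb : b = !χ v := by
        cases hχ : χ v <;> cases b <;> simp_all
      rw [hbb]

lemma transPerm_snd (χ : V → Bool) (e : Bool × V) : ((transPerm S χ) e).2 = hd S e := rfl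

lemma transPerm_inP1 (χ : V → Bool) (v : V) :
    (transPerm S χ) (inP S v).1 = (χ v, v) := by
  simp only [transPerm, Equiv.coe_fn_mk, inP_hd1, if_pos rfl, if_true]

lemma transPerm_inP2 (χ : V → Bool) (v : V) :
    (transPerm S χ) (inP S v).2 = (!(χ v), v) := by
  simp only [transPerm, Equiv.coe_fn_mk, inP_hd2]
  rw [if_neg ((inP_ne S v).symm)]

end Euler

section Euler2

open scoped Classical

variable {V : Type*} [AddCommGroup V] [Fintype V] (S : DHSys V)

theorem euler_single_cycle :
    ∃ χ : V → Bool, ∀ e : Bool × V, (transPerm S χ).SameCycle (false, S.x₀) e := by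
  classical
  set e₀ : Bool × V := (false, S.x₀) with he₀
  set F : (V → Bool) → ℕ := fun χ =>
    (Finset.univ.filter (fun e => (transPerm S χ).SameCycle e₀ e)).card with hF
  obtain ⟨χ, -, hmax⟩ := Finset.exists_max_image Finset.univ F ⟨fun _ => false, Finset.mem_univ _⟩
  refine ⟨χ, ?_⟩
  by_contra hcon
  push_neg at hcon
  obtain ⟨ebad, hebad⟩ := hcon
  set π := transPerm S χ with hπ
  set C : Bool × V → Prop := fun e => π.SameCycle e₀ e with hC
  have cl_fwd : ∀ e, C e → C (π e) := fun e he => he.trans ⟨1, by simp⟩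
  have cl_bwd : ∀ e, C (π e) → C e := fun e he => he.trans ⟨-1, by simp⟩
  have hCe₀ : C e₀ := ⟨0, by simp⟩
  -- there must be a vertex whose two in-edges are split by C
  have split : ∃ v, ¬ (C (inP S v).1 ↔ C (inP S v).2) := by
    by_contra hns
    push_neg at hns
    -- sibling closure on out-edges
    have sib : ∀ (b : Bool) (x : V), C (b, x) → C (!b, x) := by
      intro b x hbx
      set f := π.symm (b, x) with hf
      have hπf : π f = (b, x) := by rw [hf]; exact Equiv.apply_symm_apply _ _
      have hhd : hd S f = x := by
        have h1 := transPerm_snd S χ f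
        rw [show transPerm S χ f = π f from rfl, hπf] at h1
        exact h1.symm
      have hfC : C f := cl_bwd f (by rw [hπf]; exact hbx)
      rcases inP_all S x f hhd with h1 | h1
      · have hp2C : C (inP S x).2 := (hns x).mp (h1 ▸ hfC)
        have hb : b = χ x := by
          have h2 := transPerm_inP1 S χ x
          rw [← h1, hπf] at h2
          exact congrArg Prod.fst h2
        have h3 : C (!(χ x), x) := by
          rw [← transPerm_inP2 S χ x]
          exact cl_fwd _ hp2C
        rw [hb]
        exact h3
      · have hp1C : C (inP S x).1 := (hns x).mpr (h1 ▸ hfC)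
        have hb : b = !(χ x) := by
          have h2 := transPerm_inP2 S χ x
          rw [← h1, hπf] at h2
          exact congrArg Prod.fst h2
        have h3 : C (χ x, x) := by
          rw [← transPerm_inP1 S χ x]
          exact cl_fwd _ hp1C
        rw [hb, Bool.not_not]
        exact h3
    have anyb : ∀ (b b' : Bool) (x : V), C (b, x) → C (b', x) := by
      intro b b' x h
      cases b <;> cases b'
      · exact h
      · exact sib false x h
      · exact sib true x h
      · exact h
    -- vertex-level closure
    have SVstep1 : ∀ (b : Bool) (x : V), C (false, x) → C (false, S.s b x) := by
      intro b x hx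
      have hCbx : C (b, x) := anyb false b x hx
      have h1 : C (π (b, x)) := cl_fwd _ hCbx
      have h2 : (π (b, x)).2 = S.s b x := transPerm_snd S χ (b, x)
      have h3 : π (b, x) = ((π (b, x)).1, S.s b x) := by
        rw [← h2]
      rw [h3] at h1
      exact anyb _ false _ h1
    have SVstep2 : ∀ (b : Bool) (x : V), C (false, S.s b x) → C (false, x) := by
      intro b x hv
      set v := S.s b x with hvdef
      set f := π.symm (false, v) with hf
      have hπf : π f = (false, v) := by rw [hf]; exact Equiv.apply_symm_apply _ _
      have hfC : C f := cl_bwd f (by rw [hπf]; exact hv)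
      have hhd : hd S f = v := by
        have h1 := transPerm_snd S χ f
        rw [show transPerm S χ f = π f from rfl, hπf] at h1
        exact h1.symm
      have hboth : C (inP S v).1 ∧ C (inP S v).2 := by
        rcases inP_all S v f hhd with h1 | h1
        · exact ⟨h1 ▸ hfC, (hns v).mp (h1 ▸ hfC)⟩
        · exact ⟨(hns v).mpr (h1 ▸ hfC), h1 ▸ hfC⟩
      have hbx : hd S (b, x) = v := rfl
      rcases inP_all S v (b, x) hbx with h1 | h1
      · have : C (b, x) := by rw [h1]; exact hboth.1
        exact anyb b false x this
      · have : C (b, x) := by rw [h1]; exact hboth.2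
        exact anyb b false x this
    have inv : ∀ x y : V, Relation.EqvGen (fun u w => ∃ b, S.s b u = w) x y →
        (C (false, x) ↔ C (false, y)) := by
      intro x y h
      induction h with
      | rel u w huw =>
        obtain ⟨b, hb⟩ := huw
        subst hb
        exact ⟨SVstep1 b u, SVstep2 b u⟩
      | refl u => exact Iff.rfl
      | symm u w _ ih => exact ih.symm
      | trans u w z _ _ ih1 ih2 => exact ih1.trans ih2
    have hCx₀ : C (false, S.x₀) := hCe₀
    have h1 : C (false, ebad.2) := (inv S.x₀ ebad.2 (S.conn _ _)).mp hCx₀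
    have h2 : C (ebad.1, ebad.2) := anyb false ebad.1 ebad.2 h1
    exact hebad h2
  obtain ⟨v, hv⟩ := split
  have hnotsc : ¬ π.SameCycle (inP S v).1 (inP S v).2 := by
    intro hsc
    exact hv ⟨fun h1 => h1.trans hsc, fun h2 => h2.trans hsc.symm⟩
  set χ' := Function.update χ v (!(χ v)) with hχ'
  have hEQ : transPerm S χ' = π * Equiv.swap (inP S v).1 (inP S v).2 := by
    apply Equiv.ext
    intro e
    simp only [Equiv.Perm.mul_apply]
    by_cases hhd : hd S e = v
    · rcases inP_all S v e hhd with h | h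
      · rw [h, Equiv.swap_apply_left, transPerm_inP1 S χ' v, transPerm_inP2 S χ v, hχ',
          Function.update_self]
      · rw [h, Equiv.swap_apply_right, transPerm_inP2 S χ' v, transPerm_inP1 S χ v, hχ',
          Function.update_self, Bool.not_not]
    · have h1 : e ≠ (inP S v).1 := fun hc => hhd (by rw [hc, inP_hd1])
      have h2 : e ≠ (inP S v).2 := fun hc => hhd (by rw [hc, inP_hd2])
      rw [Equiv.swap_apply_of_ne_of_ne h1 h2]
      show transPerm S χ' e = transPerm S χ e
      simp only [transPerm, Equiv.coe_fn_mk]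
      rw [hχ', Function.update_of_ne hhd]
  -- now the merge increases the cycle of e₀
  have hCsplit : (C (inP S v).1 ∧ ¬ C (inP S v).2) ∨ (¬ C (inP S v).1 ∧ C (inP S v).2) := by
    by_cases h1 : C (inP S v).1 <;> by_cases h2 : C (inP S v).2 <;> tauto
  have grow : (∀ e, C e → (transPerm S χ').SameCycle e₀ e) ∧
      (∃ eb, ¬ C eb ∧ (transPerm S χ').SameCycle e₀ eb) := by
    rcases hCsplit with ⟨ha, hb⟩ | ⟨hb, ha⟩
    · -- a := p1 ∈ C, b := p2 ∉ C
      rw [hEQ]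
      have key : ∀ x, C x → (π * Equiv.swap (inP S v).1 (inP S v).2).SameCycle e₀ x := by
        intro x hx
        have h1 : π.SameCycle x (inP S v).1 := hx.symm.trans ha
        have h2 := merge_aux π (inP S v).1 (inP S v).2 hnotsc x h1
        have h3 := merge_aux π (inP S v).1 (inP S v).2 hnotsc e₀ ha
        exact h3.trans h2.symm
      refine ⟨key, ⟨(inP S v).2, hb, ?_⟩⟩
      have h4 := merge_ab π (inP S v).1 (inP S v).2 hnotsc
      exact (key _ ha).trans h4
    · -- symmetric: a := p2 ∈ C, b := p1 ∉ C
      rw [hEQ, Equiv.swap_comm]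
      have hnotsc' : ¬ π.SameCycle (inP S v).2 (inP S v).1 := fun h => hnotsc h.symm
      have key : ∀ x, C x → (π * Equiv.swap (inP S v).2 (inP S v).1).SameCycle e₀ x := by
        intro x hx
        have h1 : π.SameCycle x (inP S v).2 := hx.symm.trans ha
        have h2 := merge_aux π (inP S v).2 (inP S v).1 hnotsc' x h1
        have h3 := merge_aux π (inP S v).2 (inP S v).1 hnotsc' e₀ ha
        exact h3.trans h2.symm
      refine ⟨key, ⟨(inP S v).1, hb, ?_⟩⟩
      have h4 := merge_ab π (inP S v).2 (inP S v).1 hnotsc'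
      exact (key _ ha).trans h4
  obtain ⟨hgrow, eb, hebC, hebnew⟩ := grow
  have hlt : F χ < F χ' := by
    apply Finset.card_lt_card
    constructor
    · intro e he
      simp only [Finset.mem_filter, Finset.mem_univ, true_and] at he ⊢
      exact hgrow e he
    · intro hsub
      have := hsub (Finset.mem_filter.mpr ⟨Finset.mem_univ _, hebnew⟩)
      simp only [Finset.mem_filter, Finset.mem_univ, true_and] at this
      exact hebC this
  exact absurd (hmax χ' (Finset.mem_univ _)) (not_le.mpr hlt)

end Euler2

section Convert

open scoped Classical

variable {V : Type*} [AddCommGroup V] [Fintype V]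

theorem sys_to_seq (S : DHSys V) :
    ∃ g : ZMod (2 * Fintype.card V) → V,
      (∀ a : V, Nat.card {i : ZMod (2 * Fintype.card V) // g i = a} = 2) ∧
      (∀ a : V, Nat.card {i : ZMod (2 * Fintype.card V) // g (i - 1) + g i = a} = 2) := by
  classical
  obtain ⟨χ, hcyc⟩ := euler_single_cycle S
  set π := transPerm S χ with hπ
  set e₀ : Bool × V := (false, S.x₀) with he₀
  set N := 2 * Fintype.card V with hN
  have hcardV : 1 ≤ Fintype.card V := Fintype.card_pos
  have hN2 : 2 ≤ N := by omega
  haveI : NeZero N := ⟨by omega⟩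
  haveI : Fact (1 < N) := ⟨by omega⟩
  have hcardE : Fintype.card (Bool × V) = N := by
    rw [Fintype.card_prod, Fintype.card_bool, hN]
  -- no fixed points
  have hnofix : ∀ e : Bool × V, π e ≠ e := by
    intro e hfix
    have hall : ∀ f : Bool × V, π.SameCycle e f := fun f => (hcyc e).symm.trans (hcyc f)
    have : ∀ f : Bool × V, f = e := by
      intro f
      obtain ⟨i, hi⟩ := hall f
      rw [← hi]
      exact (π.zpow_apply_eq_self_of_apply_eq_self hfix i)
    have h1 := this (false, S.x₀)
    have h2 := this (true, S.x₀)
    rw [← h2] at h1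
    exact Bool.false_ne_true (congrArg Prod.fst h1)
  have hIsC : π.IsCycle := ⟨e₀, hnofix e₀, fun y _ => hcyc y⟩
  have hsupp : π.support = Finset.univ := by
    apply Finset.eq_univ_iff_forall.mpr
    intro e
    exact Equiv.Perm.mem_support.mpr (hnofix e)
  have horder : orderOf π = N := by
    rw [hIsC.orderOf, hsupp, Finset.card_univ, hcardE]
  set φ : ZMod N → Bool × V := fun i => (π ^ i.val) e₀ with hφ
  have hsurj : Function.Surjective φ := by
    intro e
    obtain ⟨i, hi, hpow⟩ := (hcyc e).exists_pow_eq'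
    rw [horder] at hi
    exact ⟨(i : ZMod N), by rw [hφ]; simp only [ZMod.val_natCast_of_lt hi]; exact hpow⟩
  have hbij : Function.Bijective φ := by
    rw [Fintype.bijective_iff_surjective_and_card]
    exact ⟨hsurj, by rw [ZMod.card, hcardE]⟩
  have hstep : ∀ i : ZMod N, φ (i + 1) = π (φ i) := by
    intro i
    rw [hφ]
    simp only
    have h1 : (i + 1).val = (i.val + 1) % N := by
      rw [ZMod.val_add, ZMod.val_one]
    have h2 : π ^ ((i + 1).val) = π ^ (i.val + 1) := by
      rw [h1]
      apply (pow_eq_pow_iff_modEq).mpr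
      rw [horder]
      exact (Nat.mod_modEq _ _)
    rw [h2, pow_succ', Equiv.Perm.mul_apply]
  refine ⟨fun i => (φ i).2, ?_, ?_⟩
  · intro a
    have e1 : {i : ZMod N // (φ i).2 = a} ≃ {e : Bool × V // e.2 = a} :=
      (Equiv.ofBijective φ hbij).subtypeEquiv (fun i => Iff.rfl)
    have e2 : {e : Bool × V // e.2 = a} ≃ Bool := by
      refine ⟨fun p => p.1.1, fun b => ⟨(b, a), rfl⟩, ?_, ?_⟩
      · rintro ⟨⟨b, x⟩, hp⟩
        cases hp
        rfl
      · intro b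
        rfl
    rw [Nat.card_congr (e1.trans e2), Nat.card_eq_fintype_card, Fintype.card_bool]
  · intro a
    have key : ∀ i : ZMod N, (φ (i - 1)).2 + (φ i).2 = lab S (φ (i - 1)) := by
      intro i
      have h1 : φ i = π (φ (i - 1)) := by
        rw [← hstep (i - 1), sub_add_cancel]
      rw [h1]
      rfl
    have e1 : {i : ZMod N // (φ (i-1)).2 + (φ i).2 = a} ≃ {i : ZMod N // lab S (φ (i-1)) = a} :=
      Equiv.subtypeEquiv (Equiv.refl _) (fun i => by rw [key i]; rfl)
    have e2 : {i : ZMod N // lab S (φ (i-1)) = a} ≃ {j : ZMod N // lab S (φ j) = a} :=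
      Equiv.subtypeEquiv (Equiv.subRight (1 : ZMod N)) (fun i => Iff.rfl)
    have e3 : {j : ZMod N // lab S (φ j) = a} ≃ {e : Bool × V // lab S e = a} :=
      (Equiv.ofBijective φ hbij).subtypeEquiv (fun i => Iff.rfl)
    rw [Nat.card_congr ((e1.trans e2).trans e3)]
    exact S.label2 a

end Convert

section Transfer

/-- transfer a system along an additive equivalence -/
noncomputable def DHSys.transfer {V W : Type*} [AddCommGroup V] [AddCommGroup W]
    (S : DHSys V) (e : V ≃+ W) : DHSys W := by
  refine
    { s := fun b w => e (S.s b (e.symm w))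
      head2 := ?_
      label2 := ?_
      conn := ?_
      x₀ := e S.x₀
      x₁ := e S.x₁
      hx := fun h => S.hx (e.injective h)
      loop₀ := by
        show e (S.s false (e.symm (e S.x₀))) = e S.x₀
        rw [e.symm_apply_apply, S.loop₀]
      loop₁ := by
        show e (S.s false (e.symm (e S.x₁))) = e S.x₁
        rw [e.symm_apply_apply, S.loop₁] }
  · intro a
    have key : ∀ (b : Bool) (w : W), e (S.s b (e.symm w)) = a ↔ S.s b (e.symm w) = e.symm a := by
      intro b w
      constructor
      · intro h; rw [← h, e.symm_apply_apply]
      · intro h; rw [h, e.apply_symm_apply]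
    have eq : {f : Bool × W // e (S.s f.1 (e.symm f.2)) = a} ≃
        {f : Bool × V // S.s f.1 f.2 = e.symm a} := by
      refine ⟨fun p => ⟨(p.1.1, e.symm p.1.2), ((key p.1.1 p.1.2).mp p.2)⟩,
        fun p => ⟨(p.1.1, e p.1.2), ?_⟩, ?_, ?_⟩
      · have := p.2
        rw [(key p.1.1 (e p.1.2))]
        rwa [e.symm_apply_apply]
      · rintro ⟨⟨b, w⟩, hp⟩
        apply Subtype.ext
        simp
      · rintro ⟨⟨b, v⟩, hp⟩
        apply Subtype.ext
        simp
    rw [Nat.card_congr eq]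
    exact S.head2 _
  · intro a
    have key : ∀ (b : Bool) (w : W),
        w + e (S.s b (e.symm w)) = a ↔ e.symm w + S.s b (e.symm w) = e.symm a := by
      intro b w
      constructor
      · intro h
        rw [← h, map_add, e.symm_apply_apply]
      · intro h
        have h2 := congrArg e h
        rw [map_add, e.apply_symm_apply, e.apply_symm_apply] at h2
        exact h2
    have eq : {f : Bool × W // f.2 + e (S.s f.1 (e.symm f.2)) = a} ≃
        {f : Bool × V // f.2 + S.s f.1 f.2 = e.symm a} := by
      refine ⟨fun p => ⟨(p.1.1, e.symm p.1.2), ((key p.1.1 p.1.2).mp p.2)⟩,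
        fun p => ⟨(p.1.1, e p.1.2), ?_⟩, ?_, ?_⟩
      · have hp := p.2
        rw [(key p.1.1 (e p.1.2))]
        rwa [e.symm_apply_apply]
      · rintro ⟨⟨b, w⟩, hp⟩
        apply Subtype.ext
        simp
      · rintro ⟨⟨b, v⟩, hp⟩
        apply Subtype.ext
        simp
    rw [Nat.card_congr eq]
    exact S.label2 _
  · intro x y
    have lift : ∀ u v : V, Relation.EqvGen (fun u v => ∃ b, S.s b u = v) u v →
        Relation.EqvGen (fun u v => ∃ b, e (S.s b (e.symm u)) = v) (e u) (e v) := by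
      intro u v h
      induction h with
      | rel u v huv =>
        obtain ⟨b, hb⟩ := huv
        exact Relation.EqvGen.rel _ _ ⟨b, by rw [e.symm_apply_apply, hb]⟩
      | refl u => exact Relation.EqvGen.refl _
      | symm u v _ ih => exact Relation.EqvGen.symm _ _ ih
      | trans u v w _ _ ih1 ih2 => exact Relation.EqvGen.trans _ _ _ ih1 ih2
    have h := lift (e.symm x) (e.symm y) (S.conn _ _)
    rwa [e.apply_symm_apply, e.apply_symm_apply] at h

end Transfer

section Assembly

/-- `∀ j : Fin (n+1), M j ≃+ M 0 × ∀ j : Fin n, M j.succ` -/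
def piFinSuccAE {n : ℕ} (M : Fin (n+1) → Type*) [∀ i, AddCommGroup (M i)] :
    (∀ i, M i) ≃+ M 0 × (∀ i : Fin n, M i.succ) where
  toFun f := (f 0, fun i => f i.succ)
  invFun p := Fin.cons p.1 p.2
  left_inv f := by
    funext j
    refine Fin.cases ?_ ?_ j
    · exact Fin.cons_zero _ _
    · intro i
      exact Fin.cons_succ _ _ _
  right_inv p := by
    refine Prod.ext ?_ ?_
    · show Fin.cons p.1 p.2 0 = p.1
      exact Fin.cons_zero _ _
    · funext i
      show Fin.cons p.1 p.2 i.succ = p.2 i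
      exact Fin.cons_succ _ _ _
  map_add' f g := rfl

/-- `∀ j : Fin 1, M j ≃+ M 0` -/
def piOneAE (M : Fin 1 → Type*) [∀ i, AddCommGroup (M i)] : (∀ i, M i) ≃+ M 0 where
  toFun f := f 0
  invFun a := Fin.cons a (fun i => i.elim0)
  left_inv f := by
    funext j
    refine Fin.cases ?_ ?_ j
    · exact Fin.cons_zero _ _
    · intro i
      exact i.elim0
  right_inv a := Fin.cons_zero _ _
  map_add' f g := rfl

theorem sys_pi : ∀ (k : ℕ) (m : Fin (k+1) → ℕ), (∀ j, 1 < m j) →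
    Nonempty (DHSys (∀ j, ZMod (m j))) := by
  intro k
  induction k with
  | zero =>
    intro m hm
    exact ⟨(baseSys (m 0) (hm 0)).transfer (piOneAE (fun j => ZMod (m j))).symm⟩
  | succ n ih =>
    intro m hm
    obtain ⟨S⟩ := ih (fun j => m j.succ) (fun j => hm j.succ)
    exact ⟨(prodSys S (m 0) (hm 0)).transfer (piFinSuccAE (fun j => ZMod (m j))).symm⟩

end Assembly

/-- **Every finite abelian group admits a doubly harmonious sequence.**
There is a sequence `g` of length `2 * |G|` (indexed cyclically, so that
`ĝ i = g (i - 1) + g i`, with `ĝ 0 = g m + g 0`) in which every element of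
`G` appears exactly twice among the terms and exactly twice among the cyclic
consecutive sums. -/
theorem abelian_doubly_harmonious
    (G : Type*) [AddCommGroup G] [Fintype G] :
    ∃ g : ZMod (2 * Fintype.card G) → G,
      (∀ a : G, Nat.card {i : ZMod (2 * Fintype.card G) // g i = a} = 2) ∧
      (∀ a : G, Nat.card {i : ZMod (2 * Fintype.card G) // g (i - 1) + g i = a} = 2) := by
  classical
  by_cases hG : Fintype.card G = 1
  · -- trivial group
    have hsub : ∀ a b : G, a = b := Fintype.card_le_one_iff.mp (le_of_eq hG)
    refine ⟨fun _ => 0, ?_, ?_⟩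
    · intro a
      have e : {i : ZMod (2 * Fintype.card G) // (0 : G) = a} ≃ ZMod (2 * Fintype.card G) :=
        Equiv.subtypeUnivEquiv (fun i => hsub 0 a)
      rw [Nat.card_congr e, Nat.card_zmod, hG]
    · intro a
      have e : {i : ZMod (2 * Fintype.card G) // (0 : G) + 0 = a} ≃ ZMod (2 * Fintype.card G) :=
        Equiv.subtypeUnivEquiv (fun i => hsub _ a)
      rw [Nat.card_congr e, Nat.card_zmod, hG]
  · -- nontrivial group : structure theorem
    obtain ⟨ι, hι, n, hn, ⟨eqG⟩⟩ := AddCommGroup.equiv_directSum_zmod_of_finite' G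
    haveI := hι
    rcases hk : Fintype.card ι with _ | k
    · -- impossible : G would be trivial
      exfalso
      haveI : IsEmpty ι := Fintype.card_eq_zero_iff.mp hk
      have hcard : Fintype.card G = 1 := by
        have e2 : (DirectSum ι fun i => ZMod (n i)) ≃+ ∀ i : ι, ZMod (n i) :=
          DirectSum.addEquivProd _
        have := Fintype.card_congr (eqG.trans e2).toEquiv
        rw [this]
        exact Fintype.card_unique
      exact hG hcard
    · -- main case
      have σ : ι ≃ Fin (k+1) := Fintype.equivFinOfCardEq hk
      set m : Fin (k+1) → ℕ := fun j => n (σ.symm j) with hm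
      have hm1 : ∀ j, 1 < m j := fun j => hn (σ.symm j)
      haveI : ∀ i : ι, NeZero (n i) := fun i => ⟨by have := hn i; omega⟩
      have e2 : (DirectSum ι fun i => ZMod (n i)) ≃+ ∀ i : ι, ZMod (n i) :=
        DirectSum.addEquivProd _
      have e3 : (∀ i : ι, ZMod (n i)) ≃+ (∀ j : Fin (k+1), ZMod (m j)) :=
        AddEquiv.mk' (Equiv.piCongrLeft' (fun i => ZMod (n i)) σ) (fun f g => rfl)
      obtain ⟨S⟩ := sys_pi k m hm1
      have E : G ≃+ (∀ j : Fin (k+1), ZMod (m j)) := (eqG.trans e2).trans e3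
      exact sys_to_seq (S.transfer E.symm)
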